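/- Let E, E' be Banach spaces, U a topological space, and φ : U → L(E,E') a continuous family of bounded operators (with the operator-norm topology). If φ(x₀) is a Fredholm operator for some x₀ ∈ U, then there is a neighbourhood V of x₀ such that for all x ∈ V: φ(x) is Fredholm, ind φ(x) = ind φ(x₀), dim ker φ(x) ≤ dim ker φ(x₀), and dim coker φ(x) ≤ dim coker φ(x₀). -/

import Mathlib

/-- A continuous linear operator between Banach spaces is Fredholm if it has closed image
and finite-dimensional kernel and cokernel. -/
def IsFredholmOperator {E E' : Type*} [NormedAddCommGroup E] [NormedSpace ℝ E]
    [NormedAddCommGroup E'] [NormedSpace ℝ E'] (T : E →L[ℝ] E') : Prop :=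
  IsClosed (Set.range T) ∧ FiniteDimensional ℝ (LinearMap.ker (T : E →ₗ[ℝ] E')) ∧
    FiniteDimensional ℝ (E' ⧸ LinearMap.range (T : E →ₗ[ℝ] E'))

set_option maxHeartbeats 1600000 in
/-- Local constancy of the Fredholm index and upper semicontinuity of kernel and cokernel
dimensions for a norm-continuous family `φ : U → L(E,E')` of operators between Banach
spaces: if `φ x₀` is Fredholm, then on some neighbourhood `V` of `x₀` every `φ x` is
Fredholm with the same index and with `dim ker φ x ≤ dim ker φ x₀`,
`dim coker φ x ≤ dim coker φ x₀`. -/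
theorem fredholm_local_stability {E E' U : Type*}
    [NormedAddCommGroup E] [NormedSpace ℝ E] [CompleteSpace E]
    [NormedAddCommGroup E'] [NormedSpace ℝ E'] [CompleteSpace E']
    [TopologicalSpace U]
    (φ : U → (E →L[ℝ] E')) (hφ : Continuous φ) (x₀ : U)
    (h : IsFredholmOperator (φ x₀)) :
    ∃ V ∈ nhds x₀, ∀ x ∈ V, IsFredholmOperator (φ x) ∧
      ((Module.finrank ℝ (LinearMap.ker (φ x : E →ₗ[ℝ] E')) : ℤ)
          - (Module.finrank ℝ (E' ⧸ LinearMap.range (φ x : E →ₗ[ℝ] E')) : ℤ)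
        = (Module.finrank ℝ (LinearMap.ker (φ x₀ : E →ₗ[ℝ] E')) : ℤ)
          - (Module.finrank ℝ (E' ⧸ LinearMap.range (φ x₀ : E →ₗ[ℝ] E')) : ℤ)) ∧
      Module.finrank ℝ (LinearMap.ker (φ x : E →ₗ[ℝ] E')) ≤ Module.finrank ℝ (LinearMap.ker (φ x₀ : E →ₗ[ℝ] E')) ∧
      Module.finrank ℝ (E' ⧸ LinearMap.range (φ x : E →ₗ[ℝ] E'))
        ≤ Module.finrank ℝ (E' ⧸ LinearMap.range (φ x₀ : E →ₗ[ℝ] E')) := by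
  classical
  obtain ⟨hTcl, hTker, hTcok⟩ := h
  set T : E →L[ℝ] E' := φ x₀ with hTdef
  haveI : FiniteDimensional ℝ (LinearMap.ker (T : E →ₗ[ℝ] E')) := hTker
  haveI : FiniteDimensional ℝ (E' ⧸ LinearMap.range (T : E →ₗ[ℝ] E')) := hTcok
  -- continuous projection onto ker T
  obtain ⟨p, hp⟩ := Submodule.ClosedComplemented.of_finiteDimensional (LinearMap.ker (T : E →ₗ[ℝ] E'))
  set M : Submodule ℝ E := LinearMap.ker (p : E →ₗ[ℝ] (LinearMap.ker (T : E →ₗ[ℝ] E'))) with hMdef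
  have hMc : IsClosed (M : Set E) := ContinuousLinearMap.isClosed_ker p
  have hcompl : IsCompl (LinearMap.ker (T : E →ₗ[ℝ] E')) M := LinearMap.isCompl_of_proj (f := (p : E →ₗ[ℝ] (LinearMap.ker (T : E →ₗ[ℝ] E')))) hp
  -- finite-dimensional complement of range T
  obtain ⟨N, hNcompl⟩ := Submodule.exists_isCompl (LinearMap.range (T : E →ₗ[ℝ] E'))
  haveI : FiniteDimensional ℝ N :=
    (Submodule.quotientEquivOfIsCompl _ N hNcompl).finiteDimensional
  haveI : CompleteSpace M := hMc.completeSpace_coe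
  haveI : CompleteSpace N := FiniteDimensional.complete ℝ N
  -- the family of operators M × N → E', (m, n) ↦ φ x m + n
  set g : (M × N) →L[ℝ] E := M.subtypeL.comp (ContinuousLinearMap.fst ℝ M N) with hgdef
  set c : (M × N) →L[ℝ] E' := N.subtypeL.comp (ContinuousLinearMap.snd ℝ M N) with hcdef
  set Θ : U → ((M × N) →L[ℝ] E') :=
    fun x => ((ContinuousLinearMap.compL ℝ (M × N) E E').flip g) (φ x) + c with hΘdef
  have hΘcont : Continuous Θ :=
    ((((ContinuousLinearMap.compL ℝ (M × N) E E').flip g).continuous.comp hφ).add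
      continuous_const)
  have hΘapply : ∀ x (m : M) (n : N), Θ x (m, n) = φ x m + n := by
    intro x m n
    simp [hΘdef, hgdef, hcdef]
  -- Θ x₀ is bijective
  have hker0 : LinearMap.ker (Θ x₀ : (M × N) →ₗ[ℝ] E') = ⊥ := by
    rw [Submodule.eq_bot_iff]
    rintro ⟨m, n⟩ hz
    have hz' : T m + n = 0 := by rw [← hΘapply x₀ m n]; exact hz
    have hTm : (T m : E') ∈ LinearMap.range (T : E →ₗ[ℝ] E') ⊓ N := by
      refine ⟨LinearMap.mem_range_self _ _, ?_⟩
      have : (T m : E') = -n := eq_neg_of_add_eq_zero_left hz'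
      rw [this]; exact N.neg_mem n.2
    rw [hNcompl.inf_eq_bot] at hTm
    have hmker : (m : E) ∈ LinearMap.ker (T : E →ₗ[ℝ] E') ⊓ M := ⟨hTm, m.2⟩
    rw [hcompl.inf_eq_bot] at hmker
    have hm0 : (m : E) = 0 := hmker
    have hn0 : (n : E') = 0 := by
      have : T m = 0 := by rw [hm0]; simp
      rw [this, zero_add] at hz'
      exact hz'
    exact Prod.ext (Subtype.ext hm0) (Subtype.ext hn0)
  have hrange0 : LinearMap.range (Θ x₀ : (M × N) →ₗ[ℝ] E') = ⊤ := by
    rw [LinearMap.range_eq_top]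
    intro y
    have hy : y ∈ LinearMap.range (T : E →ₗ[ℝ] E') ⊔ N := by rw [hNcompl.sup_eq_top]; trivial
    obtain ⟨t, ht, nn, hnn, hsum⟩ := Submodule.mem_sup.1 hy
    obtain ⟨u, rfl⟩ := ht
    have hu : u ∈ LinearMap.ker (T : E →ₗ[ℝ] E') ⊔ M := by rw [hcompl.sup_eq_top]; trivial
    obtain ⟨k, hk, m, hm, hkm⟩ := Submodule.mem_sup.1 hu
    refine ⟨(⟨m, hm⟩, ⟨nn, hnn⟩), ?_⟩
    rw [ContinuousLinearMap.coe_coe, hΘapply x₀ ⟨m, hm⟩ ⟨nn, hnn⟩]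
    have : T m = T u := by
      rw [← hkm]
      rw [map_add, show T k = 0 from hk, zero_add]
    rw [this]; exact hsum
  set e₀ : (M × N) ≃L[ℝ] E' := ContinuousLinearEquiv.ofBijective (Θ x₀) hker0 hrange0 with he₀def
  -- the neighbourhood
  refine ⟨Θ ⁻¹' (Set.range ContinuousLinearEquiv.toContinuousLinearMap),
    (ContinuousLinearEquiv.isOpen.preimage hΘcont).mem_nhds ⟨e₀, rfl⟩, ?_⟩
  intro x hx
  obtain ⟨e, he⟩ := hx
  set S : E →L[ℝ] E' := φ x with hSdef
  have heap : ∀ (m : M) (n : N), e (m, n) = S m + n := by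
    intro m n
    have : (e : (M × N) →L[ℝ] E') (m, n) = Θ x (m, n) := by rw [he]
    rw [← hΘapply x m n]
    exact this
  -- image of M under S
  set R : Submodule ℝ E' := Submodule.map (S : E →ₗ[ℝ] E') M with hRdef
  have hRle : R ≤ LinearMap.range (S : E →ₗ[ℝ] E') := by
    rintro _ ⟨m, hm, rfl⟩
    exact LinearMap.mem_range_self _ m
  have hRN : IsCompl R N := by
    constructor
    · rw [disjoint_iff, Submodule.eq_bot_iff]
      rintro y ⟨⟨m, hm, rfl⟩, hyN⟩
      have h1 : e (⟨m, hm⟩, 0) = S m := by rw [heap]; simp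
      have h2 : e (0, ⟨S m, hyN⟩) = S m := by rw [heap]; simp
      have := e.injective (h1.trans h2.symm)
      have hm0 : (⟨m, hm⟩ : M) = 0 := congrArg Prod.fst this
      have : m = 0 := Subtype.ext_iff.1 hm0
      rw [this]; simp
    · rw [codisjoint_iff, Submodule.eq_top_iff']
      intro y
      obtain ⟨⟨m, n⟩, rfl⟩ := e.surjective y
      rw [heap]
      exact Submodule.add_mem_sup ⟨m, m.2, rfl⟩ n.2
  haveI hQRfd : FiniteDimensional ℝ (E' ⧸ R) :=
    (Submodule.quotientEquivOfIsCompl R N hRN).symm.finiteDimensional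
  have hn : Module.finrank ℝ (E' ⧸ R) = Module.finrank ℝ (E' ⧸ LinearMap.range (T : E →ₗ[ℝ] E')) := by
    rw [(Submodule.quotientEquivOfIsCompl R N hRN).finrank_eq,
      (Submodule.quotientEquivOfIsCompl _ N hNcompl).finrank_eq]
  -- the finite-dimensional comparison map
  set f : (LinearMap.ker (T : E →ₗ[ℝ] E')) →ₗ[ℝ] E' ⧸ R :=
    R.mkQ ∘ₗ (S : E →ₗ[ℝ] E') ∘ₗ (LinearMap.ker (T : E →ₗ[ℝ] E')).subtype with hfdef
  set g' : (LinearMap.ker (S : E →ₗ[ℝ] E')) →ₗ[ℝ] (LinearMap.ker (T : E →ₗ[ℝ] E')) :=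
    (p : E →ₗ[ℝ] (LinearMap.ker (T : E →ₗ[ℝ] E'))) ∘ₗ (LinearMap.ker (S : E →ₗ[ℝ] E')).subtype with hg'def
  have hg'inj : Function.Injective g' := by
    rw [injective_iff_map_eq_zero]
    intro u hu
    have hpu : p (u : E) = 0 := hu
    have huM : (u : E) ∈ M := hpu
    have h1 : e (⟨(u : E), huM⟩, 0) = 0 := by
      rw [heap]
      simp [LinearMap.mem_ker.1 u.2]
    have := e.injective (h1.trans (map_zero e).symm)
    have h2 : (⟨(u : E), huM⟩ : M) = 0 := congrArg Prod.fst this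
    have hcoe : (u : E) = 0 := congrArg Subtype.val h2
    exact Subtype.ext hcoe
  have hpM : ∀ m ∈ M, p m = 0 := fun m hm => hm
  have hrange_g' : LinearMap.range g' = LinearMap.ker f := by
    apply le_antisymm
    · rintro _ ⟨u, rfl⟩
      rw [LinearMap.mem_ker]
      have hSu : S (u : E) = 0 := u.2
      have hMmem : (u : E) - (p (u : E) : E) ∈ M := by
        have h0 : p ((u : E) - (p (u : E) : E)) = 0 := by
          rw [map_sub, hp (p (u : E)), sub_self]
        exact LinearMap.mem_ker.2 h0
      have hSv : S ((p (u : E) : E)) ∈ R := by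
        have heq : S ((p (u : E) : E)) = - S ((u : E) - (p (u : E) : E)) := by
          rw [map_sub, hSu]; abel
        rw [heq]
        exact R.neg_mem ⟨_, hMmem, rfl⟩
      show R.mkQ (S ((p (u : E) : E))) = 0
      rwa [Submodule.mkQ_apply, Submodule.Quotient.mk_eq_zero]
    · intro v hv
      have hSv : S (v : E) ∈ R := by
        have : R.mkQ (S (v : E)) = 0 := hv
        rwa [Submodule.mkQ_apply, Submodule.Quotient.mk_eq_zero] at this
      obtain ⟨m, hm, hSm⟩ := hSv
      have hSm' : S m = S (v : E) := hSm
      have huker : ((v : E) - m) ∈ LinearMap.ker (S : E →ₗ[ℝ] E') := by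
        rw [LinearMap.mem_ker, map_sub, ContinuousLinearMap.coe_coe, hSm', sub_self]
      refine ⟨⟨(v : E) - m, huker⟩, ?_⟩
      show p ((v : E) - m) = v
      rw [map_sub, hp v, hpM m hm, sub_zero]
  haveI : FiniteDimensional ℝ (LinearMap.ker (S : E →ₗ[ℝ] E')) :=
    (LinearEquiv.ofInjective g' hg'inj).symm.finiteDimensional
  have hkdim : Module.finrank ℝ (LinearMap.ker (S : E →ₗ[ℝ] E')) = Module.finrank ℝ (LinearMap.ker f) := by
    rw [(LinearEquiv.ofInjective g' hg'inj).finrank_eq, hrange_g']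
  have hrn : Module.finrank ℝ (LinearMap.range f) + Module.finrank ℝ (LinearMap.ker f)
      = Module.finrank ℝ (LinearMap.ker (T : E →ₗ[ℝ] E')) := f.finrank_range_add_finrank_ker
  -- quotient comparison
  have hrS : LinearMap.range (S : E →ₗ[ℝ] E')
      = Submodule.map (S : E →ₗ[ℝ] E') (LinearMap.ker (T : E →ₗ[ℝ] E')) ⊔ R := by
    have h1 : LinearMap.range (S : E →ₗ[ℝ] E') = Submodule.map (S : E →ₗ[ℝ] E') ⊤ := by
      rw [Submodule.map_top]
    rw [h1, ← hcompl.sup_eq_top, Submodule.map_sup]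
  have hmapmk : Submodule.map R.mkQ (LinearMap.range (S : E →ₗ[ℝ] E')) = LinearMap.range f := by
    have hfr : LinearMap.range f
        = Submodule.map R.mkQ (Submodule.map (S : E →ₗ[ℝ] E') (LinearMap.ker (T : E →ₗ[ℝ] E'))) := by
      rw [hfdef, LinearMap.range_comp, LinearMap.range_comp, Submodule.range_subtype]
    have hRbot : Submodule.map R.mkQ R = ⊥ := by
      rw [Submodule.eq_bot_iff]
      rintro _ ⟨r, hr, rfl⟩
      rw [Submodule.mkQ_apply, Submodule.Quotient.mk_eq_zero]
      exact hr
    rw [hrS, Submodule.map_sup, hRbot, sup_bot_eq, hfr]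
  have hcoker_eq : Module.finrank ℝ (E' ⧸ LinearMap.range (S : E →ₗ[ℝ] E'))
      = Module.finrank ℝ ((E' ⧸ R) ⧸ LinearMap.range f) := by
    rw [← (Submodule.quotientQuotientEquivQuotient R (LinearMap.range (S : E →ₗ[ℝ] E')) hRle).finrank_eq,
      hmapmk]
  haveI : FiniteDimensional ℝ (E' ⧸ LinearMap.range (S : E →ₗ[ℝ] E')) :=
    (Submodule.quotientQuotientEquivQuotient R (LinearMap.range (S : E →ₗ[ℝ] E')) hRle).finiteDimensional
  have hqrn : Module.finrank ℝ ((E' ⧸ R) ⧸ LinearMap.range f)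
      + Module.finrank ℝ (LinearMap.range f) = Module.finrank ℝ (E' ⧸ R) :=
    Submodule.finrank_quotient_add_finrank _
  -- closedness of the range of S
  set W : Submodule ℝ E' := LinearMap.range (S : E →ₗ[ℝ] E') ⊓ N with hWdef
  haveI : FiniteDimensional ℝ W := Submodule.finiteDimensional_of_le inf_le_right
  have hWc : IsClosed (W : Set E') := Submodule.closed_of_finiteDimensional W
  have hA : IsClosed ((Set.univ : Set M) ×ˢ ((↑) ⁻¹' (W : Set E') : Set N)) :=
    isClosed_univ.prod (hWc.preimage continuous_subtype_val)
  have him : ⇑e '' ((Set.univ : Set M) ×ˢ ((↑) ⁻¹' (W : Set E') : Set N))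
      = (LinearMap.range (S : E →ₗ[ℝ] E') : Set E') := by
    apply Set.eq_of_subset_of_subset
    · rintro _ ⟨⟨m, n⟩, ⟨-, hn⟩, rfl⟩
      rw [heap]
      exact (LinearMap.range (S : E →ₗ[ℝ] E')).add_mem (LinearMap.mem_range_self _ _) hn.1
    · rintro _ ⟨u, rfl⟩
      have hy : S u ∈ R ⊔ N := by rw [hRN.sup_eq_top]; trivial
      obtain ⟨r, hr, nn, hnn, hsum⟩ := Submodule.mem_sup.1 hy
      obtain ⟨m, hm, rfl⟩ := hr
      have hsum' : S m + nn = S u := hsum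
      have hnnW : nn ∈ W := ⟨by
        have : nn = S u - S m := by rw [← hsum']; abel
        rw [this]
        exact (LinearMap.range (S : E →ₗ[ℝ] E')).sub_mem (LinearMap.mem_range_self _ _)
          (LinearMap.mem_range_self _ _), hnn⟩
      refine ⟨(⟨m, hm⟩, ⟨nn, hnn⟩), ⟨Set.mem_univ _, hnnW⟩, ?_⟩
      rw [heap]
      exact hsum'
  have hScl : IsClosed (Set.range ⇑S) := by
    have h1 : IsClosed (⇑e '' ((Set.univ : Set M) ×ˢ ((↑) ⁻¹' (W : Set E') : Set N))) :=
      e.toHomeomorph.isClosedMap _ hA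
    rw [him] at h1
    have h2 : (LinearMap.range (S : E →ₗ[ℝ] E') : Set E') = Set.range ⇑S := by
      ext y; simp [LinearMap.mem_range]
    rwa [h2] at h1
  -- assemble
  exact ⟨⟨hScl, inferInstance, inferInstance⟩, by omega, by omega, by omega⟩
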